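/- There exists a constant c > 0 such that for every real number s with |s| ≥ 2, |√(is)·sinh(is)·cosh(√(is)) + cosh(is)·sinh(√(is))| ≥ c·exp(|s|^{1/2}/√2). -/

import Mathlib

set_option maxHeartbeats 1000000
open Complex


lemma sqrt_I_mul_pos {s : ℝ} (hs : 0 < s) :
    (Complex.I * (s:ℂ)) ^ (1/2 : ℂ)
      = ((Real.sqrt s / Real.sqrt 2 : ℝ) : ℂ) * (1 + Complex.I) := by
  have hz : (Complex.I * (s:ℂ)) ≠ 0 := by
    simp [Complex.ext_iff, hs.ne']
  have habs : ‖Complex.I * (s:ℂ)‖ = s := by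
    simp [abs_of_pos hs]
  have harg : (Complex.I * (s:ℂ)).arg = Real.pi / 2 := by
    rw [Complex.arg_eq_pi_div_two_iff]
    constructor <;> simp [hs]
  have hlog : Complex.log (Complex.I * s)
      = (Real.log s : ℂ) + ((Real.pi/2 : ℝ) : ℂ) * Complex.I := by
    apply Complex.ext <;>
      simp [Complex.log_re, Complex.log_im, habs, harg]
  rw [Complex.cpow_def_of_ne_zero hz, hlog]
  have h1 : ((Real.log s : ℂ) + ((Real.pi/2 : ℝ) : ℂ) * Complex.I) * (1/2)
      = ((Real.log s / 2 : ℝ) : ℂ) + ((Real.pi/4 : ℝ) : ℂ) * Complex.I := by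
    push_cast; ring
  rw [h1, Complex.exp_add, Complex.exp_mul_I]
  have h2 : Complex.exp ((Real.log s / 2 : ℝ) : ℂ) = ((Real.sqrt s : ℝ) : ℂ) := by
    rw [← Complex.ofReal_exp]
    norm_cast
    rw [← Real.log_sqrt hs.le, Real.exp_log (Real.sqrt_pos.mpr hs)]
  have h3 : Complex.cos ((Real.pi/4 : ℝ) : ℂ) = ((Real.sqrt 2 / 2 : ℝ) : ℂ) := by
    rw [← Complex.ofReal_cos]; norm_cast; exact Real.cos_pi_div_four
  have h4 : Complex.sin ((Real.pi/4 : ℝ) : ℂ) = ((Real.sqrt 2 / 2 : ℝ) : ℂ) := by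
    rw [← Complex.ofReal_sin]; norm_cast; exact Real.sin_pi_div_four
  rw [h2, h3, h4]
  have h5 : ((Real.sqrt 2 : ℝ) : ℂ) * ((Real.sqrt 2 : ℝ) : ℂ) = 2 := by
    norm_cast
    rw [Real.mul_self_sqrt (by norm_num)]
  have h6 : ((Real.sqrt 2 : ℝ) : ℂ) ≠ 0 := by
    norm_cast
    exact Real.sqrt_ne_zero'.mpr (by norm_num)
  push_cast
  field_simp
  linear_combination ((Real.sqrt s : ℂ) * (1 + Complex.I)) * h5


lemma sqrt_I_mul_neg {s : ℝ} (hs : s < 0) :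
    (Complex.I * (s:ℂ)) ^ (1/2 : ℂ)
      = ((Real.sqrt (-s) / Real.sqrt 2 : ℝ) : ℂ) * (1 - Complex.I) := by
  have hz : (Complex.I * (s:ℂ)) ≠ 0 := by
    simp [Complex.ext_iff, hs.ne]
  have habs : ‖Complex.I * (s:ℂ)‖ = -s := by
    simp [abs_of_neg hs]
  have harg : (Complex.I * (s:ℂ)).arg = -(Real.pi / 2) := by
    rw [Complex.arg_eq_neg_pi_div_two_iff]
    constructor <;> simp [hs]
  have hlog : Complex.log (Complex.I * s)
      = (Real.log (-s) : ℂ) + ((-(Real.pi/2) : ℝ) : ℂ) * Complex.I := by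
    apply Complex.ext <;>
      simp [Complex.log_re, Complex.log_im, habs, harg]
  rw [Complex.cpow_def_of_ne_zero hz, hlog]
  have h1 : ((Real.log (-s) : ℂ) + ((-(Real.pi/2) : ℝ) : ℂ) * Complex.I) * (1/2)
      = ((Real.log (-s) / 2 : ℝ) : ℂ) + ((-(Real.pi/4) : ℝ) : ℂ) * Complex.I := by
    push_cast; ring
  rw [h1, Complex.exp_add, Complex.exp_mul_I]
  have hs' : 0 < -s := by linarith
  have h2 : Complex.exp ((Real.log (-s) / 2 : ℝ) : ℂ) = ((Real.sqrt (-s) : ℝ) : ℂ) := by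
    rw [← Complex.ofReal_exp]
    norm_cast
    rw [← Real.log_sqrt hs'.le, Real.exp_log (Real.sqrt_pos.mpr hs')]
  have h3 : Complex.cos ((-(Real.pi/4) : ℝ) : ℂ) = ((Real.sqrt 2 / 2 : ℝ) : ℂ) := by
    rw [← Complex.ofReal_cos]; norm_cast
    rw [Real.cos_neg]; exact Real.cos_pi_div_four
  have h4 : Complex.sin ((-(Real.pi/4) : ℝ) : ℂ) = ((-(Real.sqrt 2 / 2) : ℝ) : ℂ) := by
    rw [← Complex.ofReal_sin]; norm_cast
    rw [Real.sin_neg, Real.sin_pi_div_four]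
  rw [h2, h3, h4]
  have h5 : ((Real.sqrt 2 : ℝ) : ℂ) * ((Real.sqrt 2 : ℝ) : ℂ) = 2 := by
    norm_cast
    rw [Real.mul_self_sqrt (by norm_num)]
  have h6 : ((Real.sqrt 2 : ℝ) : ℂ) ≠ 0 := by
    norm_cast
    exact Real.sqrt_ne_zero'.mpr (by norm_num)
  push_cast
  field_simp
  linear_combination ((Real.sqrt (-s) : ℂ) * (1 - Complex.I)) * h5


lemma main_est {s a σ : ℝ} (ha : 1 ≤ a) (hσ : σ = 1 ∨ σ = -1)
    (hw : (Complex.I * (s:ℂ)) ^ (1/2 : ℂ) = (a:ℂ) * (1 + (σ:ℂ) * Complex.I)) :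
    (1/10) * Real.exp a ≤
      ‖(Complex.I * s) ^ (1/2 : ℂ) * Complex.sinh (Complex.I * s) *
          Complex.cosh ((Complex.I * s) ^ (1/2 : ℂ)) +
        Complex.cosh (Complex.I * s) * Complex.sinh ((Complex.I * s) ^ (1/2 : ℂ))‖ := by
  have hσ2 : σ^2 = 1 := by rcases hσ with h | h <;> simp [h]
  set w : ℂ := (a:ℂ) * (1 + (σ:ℂ) * Complex.I) with hwdef
  set u := Real.sin s with hu
  set c := Real.cos s with hc
  have hIs : Complex.I * (s:ℂ) = (s:ℂ) * Complex.I := mul_comm _ _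
  have hsinh : Complex.sinh (Complex.I * s) = ((u : ℝ):ℂ) * Complex.I := by
    rw [hIs, Complex.sinh_mul_I, ← Complex.ofReal_sin]
  have hcosh : Complex.cosh (Complex.I * s) = ((c : ℝ):ℂ) := by
    rw [hIs, Complex.cosh_mul_I, ← Complex.ofReal_cos]
  rw [hw, hsinh, hcosh]
  set A : ℂ := (u:ℂ) * w * Complex.I + (c:ℂ) with hA
  set B : ℂ := (u:ℂ) * w * Complex.I - (c:ℂ) with hB
  have hE : w * ((u:ℂ) * Complex.I) * Complex.cosh w + (c:ℂ) * Complex.sinh w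
      = (Complex.exp w * A + Complex.exp (-w) * B) / 2 := by
    simp only [Complex.cosh, Complex.sinh, hA, hB]; ring
  rw [hE]
  -- basic facts
  have hre : w.re = a := by simp [hwdef]
  have hnre : (-w).re = -a := by simp [hre]
  have hexpw : ‖Complex.exp w‖ = Real.exp a := by
    rw [Complex.norm_exp, hre]
  have hexpnw : ‖Complex.exp (-w)‖ = Real.exp (-a) := by
    rw [Complex.norm_exp, hnre]
  have hA_form : A = ((c - σ*a*u : ℝ):ℂ) + ((a*u : ℝ):ℂ) * Complex.I := by
    rw [hA, hwdef]; push_cast; ring_nf; rw [Complex.I_sq]; ring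
  have hAsq : ‖A‖^2 = (c - σ*a*u)^2 + (a*u)^2 := by
    rw [Complex.sq_norm, hA_form, Complex.normSq_add_mul_I]
  have hpyth : u^2 + c^2 = 1 := Real.sin_sq_add_cos_sq s
  have hsq_eq : (σ*a*u)^2 = (a*u)^2 := by
    rw [show (σ*a*u)^2 = σ^2*(a*u)^2 from by ring, hσ2, one_mul]
  have hAsq_low : (1/3 : ℝ) ≤ ‖A‖^2 := by
    rw [hAsq]
    nlinarith [sq_nonneg (2*c - 3*(σ*a*u)), hsq_eq,
      mul_nonneg (show (0:ℝ) ≤ a^2 - 1 by nlinarith) (sq_nonneg u)]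
  have hA_low : (0.577 : ℝ) ≤ ‖A‖ := by
    nlinarith [norm_nonneg A]
  -- |w| = sqrt 2 * a
  have hw_abs : ‖w‖ = Real.sqrt 2 * a := by
    rw [hwdef]
    rw [norm_mul]
    have h1 : ‖((a:ℝ):ℂ)‖ = a := by
      rw [Complex.norm_real]; exact abs_of_pos (by linarith)
    have h2 : ‖(1 + (σ:ℂ) * Complex.I)‖ = Real.sqrt 2 := by
      rw [show (1 + (σ:ℂ) * Complex.I) = ((1:ℝ):ℂ) + ((σ:ℝ):ℂ) * Complex.I by push_cast; ring]
      rw [Complex.norm_def, Complex.normSq_add_mul_I]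
      rw [hσ2]; norm_num
    rw [h1, h2]; ring
  have hB_up : ‖B‖ ≤ Real.sqrt 2 * a + 1 := by
    have h1 : ‖B‖ ≤ ‖(u:ℂ) * w * Complex.I‖ + ‖((c:ℝ):ℂ)‖ := norm_sub_le _ _
    have h2 : ‖(u:ℂ) * w * Complex.I‖ = |u| * ‖w‖ := by
      rw [norm_mul, norm_mul, Complex.norm_I, Complex.norm_real, mul_one, Real.norm_eq_abs]
    have h3 : |u| ≤ 1 := Real.abs_sin_le_one s
    have h4 : ‖((c:ℝ):ℂ)‖ ≤ 1 := by
      rw [Complex.norm_real, Real.norm_eq_abs]; exact Real.abs_cos_le_one s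
    have h5 : (0:ℝ) ≤ ‖w‖ := norm_nonneg _
    nlinarith [h1, h2, h3, h4, h5, hw_abs, Real.sqrt_nonneg 2]
  -- norm lower bound
  have hnorm : (‖Complex.exp w * A‖ - ‖Complex.exp (-w) * B‖)/2
      ≤ ‖(Complex.exp w * A + Complex.exp (-w) * B) / 2‖ := by
    rw [norm_div, norm_ofNat]
    have h0 := norm_sub_norm_le (Complex.exp w * A) (-(Complex.exp (-w) * B))
    rw [sub_neg_eq_add, norm_neg] at h0
    linarith
  refine le_trans ?_ hnorm
  rw [norm_mul, norm_mul, hexpw, hexpnw]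
  -- numeric endgame
  have hexp1 : (2.718 : ℝ) ≤ Real.exp 1 := le_of_lt (by
    have := Real.exp_one_gt_d9; linarith)
  have hexpa : Real.exp 1 ≤ Real.exp a := Real.exp_le_exp.mpr ha
  have hs2 : Real.sqrt 2 ≤ 1.415 := by
    rw [show (1.415:ℝ) = Real.sqrt (1.415^2) from (Real.sqrt_sq (by norm_num)).symm]
    exact Real.sqrt_le_sqrt (by norm_num)
  have haexp : a ≤ Real.exp (a - 1) := by
    have := Real.add_one_le_exp (a - 1); linarith
  have hterm2 : Real.exp (-a) * ‖B‖ ≤ (Real.sqrt 2 + 1) / Real.exp 1 := by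
    have e1 : Real.exp (-a) * ‖B‖ ≤ Real.exp (-a) * ((Real.sqrt 2 + 1) * a) := by
      apply mul_le_mul_of_nonneg_left _ (Real.exp_nonneg _)
      nlinarith [Real.sqrt_nonneg 2]
    have e2 : Real.exp (-a) * ((Real.sqrt 2 + 1) * a)
        ≤ Real.exp (-a) * ((Real.sqrt 2 + 1) * Real.exp (a-1)) := by
      apply mul_le_mul_of_nonneg_left _ (Real.exp_nonneg _)
      nlinarith [Real.sqrt_nonneg 2]
    have e3 : Real.exp (-a) * ((Real.sqrt 2 + 1) * Real.exp (a-1))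
        = (Real.sqrt 2 + 1) / Real.exp 1 := by
      have h9 : Real.exp (-a) * Real.exp (a-1) = Real.exp (-1) := by
        rw [← Real.exp_add, show -a + (a - 1) = -1 by ring]
      calc Real.exp (-a) * ((Real.sqrt 2 + 1) * Real.exp (a-1))
          = (Real.sqrt 2 + 1) * (Real.exp (-a) * Real.exp (a-1)) := by ring
        _ = (Real.sqrt 2 + 1) * Real.exp (-1) := by rw [h9]
        _ = (Real.sqrt 2 + 1) / Real.exp 1 := by rw [Real.exp_neg]; ring
    linarith
  have hexp1pos : (0:ℝ) < Real.exp 1 := Real.exp_pos 1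
  have hterm2' : Real.exp (-a) * ‖B‖ ≤ 2.415 / 2.718 := by
    refine le_trans hterm2 ?_
    rw [div_le_div_iff₀ hexp1pos (by norm_num)]
    nlinarith
  have hta : (2.718:ℝ) ≤ Real.exp a := le_trans hexp1 hexpa
  have hAB : Real.exp a * 0.577 ≤ Real.exp a * ‖A‖ :=
    mul_le_mul_of_nonneg_left hA_low (Real.exp_nonneg _)
  nlinarith [hAB, hterm2', hta]


/-- There exists `c > 0` such that for every real `s` with `|s| ≥ 2`,
`|√(is)·sinh(is)·cosh(√(is)) + cosh(is)·sinh(√(is))| ≥ c·exp(|s|^{1/2}/√2)`,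
where `√z = z ^ (1/2 : ℂ)` is the principal branch of the complex square root
(Dirichlet case of the characteristic-function lower bound). -/
theorem wave_heat_dirichlet_char_function_lower_bound :
    ∃ c : ℝ, 0 < c ∧ ∀ s : ℝ, 2 ≤ |s| →
      c * Real.exp (Real.sqrt |s| / Real.sqrt 2) ≤
        ‖(Complex.I * s) ^ (1/2 : ℂ) * Complex.sinh (Complex.I * s) *
            Complex.cosh ((Complex.I * s) ^ (1/2 : ℂ)) +
          Complex.cosh (Complex.I * s) * Complex.sinh ((Complex.I * s) ^ (1/2 : ℂ))‖ := by
  refine ⟨1/10, by norm_num, ?_⟩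
  intro s hs
  have hs0 : s ≠ 0 := by
    intro h; rw [h] at hs; simp at hs; linarith
  have h2pos : (0:ℝ) < Real.sqrt 2 := Real.sqrt_pos.mpr (by norm_num)
  have ha : 1 ≤ Real.sqrt |s| / Real.sqrt 2 := by
    rw [le_div_iff₀ h2pos, one_mul]
    exact Real.sqrt_le_sqrt hs
  rcases lt_or_gt_of_ne hs0 with hneg | hpos
  · have hw := sqrt_I_mul_neg hneg
    have hw' : (Complex.I * (s:ℂ)) ^ (1/2 : ℂ)
        = ((Real.sqrt |s| / Real.sqrt 2 : ℝ) : ℂ) * (1 + ((-1 : ℝ):ℂ) * Complex.I) := by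
      rw [hw, abs_of_neg hneg]; push_cast; ring
    exact main_est ha (Or.inr rfl) hw'
  · have hw := sqrt_I_mul_pos hpos
    have hw' : (Complex.I * (s:ℂ)) ^ (1/2 : ℂ)
        = ((Real.sqrt |s| / Real.sqrt 2 : ℝ) : ℂ) * (1 + ((1 : ℝ):ℂ) * Complex.I) := by
      rw [hw, abs_of_pos hpos]; push_cast; ring
    exact main_est ha (Or.inl rfl) hw'
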